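/- arXiv:2003.09677 — 2 statements merged into one kernel-verified Lean document; each statement's English description precedes it below -/
import Mathlib

section
/- For an exponentially distributed random variable X with rate λ > 0, E[log₂(1+X)] ≥ log₂(1 + e^{-γ}/λ), where γ is the Euler–Mascheroni constant. -/
open MeasureTheory Real Set Filter Asymptotics
open scoped Topology ENNReal NNReal



lemma integrableOn_log_mul_exp :
    IntegrableOn (fun x => Real.log x * Real.exp (-x)) (Ioi (0:ℝ)) := by
  have H := mellin_hasDerivAt_of_isBigO_rpow (E := ℂ)
      (f := fun x : ℝ => ((Real.exp (-x) : ℝ) : ℂ)) (s := 1) (b := 0)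
      ?_ ?_ (lt_add_one _) ?_ (by simp)
  · have h := H.1
    rw [MellinConvergent] at h
    have h2 := h.re
    refine (IntegrableOn.congr_fun h2 (fun t ht => ?_) measurableSet_Ioi)
    simp [Complex.cpow_zero, ← Complex.ofReal_neg, Complex.exp_ofReal_re]
  · refine (Continuous.continuousOn ?_).locallyIntegrableOn measurableSet_Ioi
    exact Complex.continuous_ofReal.comp (Real.continuous_exp.comp continuous_neg)
  · rw [← isBigO_norm_left]
    simp_rw [Complex.norm_real, isBigO_norm_left]
    simpa only [neg_one_mul] using (isLittleO_exp_neg_mul_rpow_atTop zero_lt_one _).isBigO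
  · simp_rw [neg_zero, Real.rpow_zero]
    refine isBigO_const_of_tendsto (?_ : Tendsto _ _ (𝓝 (1 : ℂ))) one_ne_zero
    rw [(by simp : (1 : ℂ) = Real.exp (-0))]
    exact (Complex.continuous_ofReal.comp
      (Real.continuous_exp.comp continuous_neg)).continuousWithinAt


lemma gamma_log_integral : ∫ x in Set.Ioi (0:ℝ), Real.log x * Real.exp (-x)
    = -Real.eulerMascheroniConstant := by
  have h1 := Complex.hasDerivAt_GammaIntegral (s := 1) (by norm_num)
  have h2 : Complex.GammaIntegral =ᶠ[𝓝 1] Complex.Gamma := by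
    have : {s : ℂ | 0 < s.re} ∈ 𝓝 (1 : ℂ) := by
      refine (isOpen_lt continuous_const Complex.continuous_re).mem_nhds (by norm_num)
    filter_upwards [this] with s hs
    exact (Complex.Gamma_eq_integral hs).symm
  have h3 : HasDerivAt Complex.Gamma
      (∫ t : ℝ in Ioi 0, (t:ℂ) ^ ((1:ℂ) - 1) * (Real.log t * Real.exp (-t))) 1 :=
    h1.congr_of_eventuallyEq h2.symm
  have h4 := h3.unique Complex.hasDerivAt_Gamma_one
  have h5 : (∫ t : ℝ in Ioi 0, (t:ℂ) ^ ((1:ℂ) - 1) * (Real.log t * Real.exp (-t)))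
      = ∫ t : ℝ in Ioi 0, ((Real.log t * Real.exp (-t) : ℝ) : ℂ) := by
    refine setIntegral_congr_fun measurableSet_Ioi fun t ht => ?_
    simp
  rw [h5] at h4
  rw [show ((∫ t : ℝ in Ioi 0, ((Real.log t * Real.exp (-t) : ℝ) : ℂ)))
      = ((∫ t : ℝ in Ioi 0, Real.log t * Real.exp (-t) : ℝ) : ℂ) from integral_ofReal] at h4
  exact_mod_cast h4


lemma hasDerivAt_log_one_add_exp (x : ℝ) :
    HasDerivAt (fun x => Real.log (1 + Real.exp x)) (Real.exp x / (1 + Real.exp x)) x := by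
  have h0 : (0:ℝ) < 1 + Real.exp x := by positivity
  have h1 : HasDerivAt (fun x => 1 + Real.exp x) (Real.exp x) x :=
    (Real.hasDerivAt_exp x).const_add 1
  simpa [div_eq_mul_inv, mul_comm, Function.comp_def] using (Real.hasDerivAt_log h0.ne').comp x h1

lemma hasDerivAt_inner (x : ℝ) :
    HasDerivAt (fun x => Real.exp x / (1 + Real.exp x))
      (Real.exp x / (1 + Real.exp x) ^ 2) x := by
  have h0 : (0:ℝ) < 1 + Real.exp x := by positivity
  have h1 : HasDerivAt (fun x => 1 + Real.exp x) (Real.exp x) x :=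
    (Real.hasDerivAt_exp x).const_add 1
  have := (Real.hasDerivAt_exp x).div h1 h0.ne'
  convert this using 1
  · rfl
  · rfl
  · rfl
  ring

lemma convexOn_log_one_add_exp : ConvexOn ℝ Set.univ (fun x => Real.log (1 + Real.exp x)) := by
  have hd : deriv (fun x => Real.log (1 + Real.exp x))
      = fun x => Real.exp x / (1 + Real.exp x) :=
    funext fun x => (hasDerivAt_log_one_add_exp x).deriv
  refine convexOn_univ_of_deriv2_nonneg
    (fun x => (hasDerivAt_log_one_add_exp x).differentiableAt) ?_ ?_
  · rw [hd]; exact fun x => (hasDerivAt_inner x).differentiableAt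
  · intro x
    have : deriv^[2] (fun x => Real.log (1 + Real.exp x)) x
        = Real.exp x / (1 + Real.exp x) ^ 2 := by
      rw [Function.iterate_succ, Function.iterate_one, Function.comp_apply, hd]
      exact (hasDerivAt_inner x).deriv
    rw [this]
    positivity

lemma convexOn_logb_one_add_exp :
    ConvexOn ℝ Set.univ (fun x => Real.logb 2 (1 + Real.exp x)) := by
  have h := convexOn_log_one_add_exp.smul (c := (Real.log 2)⁻¹)
    (by positivity)
  simpa [Real.logb, div_eq_inv_mul] using h



lemma integrableOn_aux (l : ℝ) (hl : 0 < l) :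
    IntegrableOn (fun u => (Real.log u - Real.log l) * Real.exp (-u)) (Ioi (0:ℝ)) := by
  have h2 : IntegrableOn (fun u => Real.log l * Real.exp (-u)) (Ioi (0:ℝ)) := by
    have := (exp_neg_integrableOn_Ioi 0 one_pos).const_mul (Real.log l)
    refine IntegrableOn.congr_fun this (fun u _ => by simp [neg_one_mul]) measurableSet_Ioi
  refine IntegrableOn.congr_fun (integrableOn_log_mul_exp.sub h2) (fun u _ => by simp only [Pi.sub_apply]; ring) measurableSet_Ioi

lemma integral_aux (l : ℝ) (hl : 0 < l) :
    ∫ u in Ioi (0:ℝ), (Real.log u - Real.log l) * Real.exp (-u)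
      = -Real.eulerMascheroniConstant - Real.log l := by
  have h2 : IntegrableOn (fun u => Real.log l * Real.exp (-u)) (Ioi (0:ℝ)) := by
    have := (exp_neg_integrableOn_Ioi 0 one_pos).const_mul (Real.log l)
    refine IntegrableOn.congr_fun this (fun u _ => by simp [neg_one_mul]) measurableSet_Ioi
  have hsplit : ∀ u : ℝ, (Real.log u - Real.log l) * Real.exp (-u)
      = Real.log u * Real.exp (-u) - Real.log l * Real.exp (-u) := fun u => by ring
  rw [setIntegral_congr_fun measurableSet_Ioi (fun u _ => hsplit u),
    integral_sub integrableOn_log_mul_exp h2, gamma_log_integral,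
    integral_const_mul, integral_exp_neg_Ioi_zero]
  ring

lemma log_pdf_integrable (l : ℝ) (hl : 0 < l) :
    IntegrableOn (fun x => Real.log x * (l * Real.exp (-l * x))) (Ioi (0:ℝ)) := by
  have h := (integrableOn_Ioi_comp_mul_left_iff
    (fun u => (Real.log u - Real.log l) * Real.exp (-u)) 0 hl).2
    (by simpa using integrableOn_aux l hl)
  have h2 : IntegrableOn (fun x => Real.log x * Real.exp (-(l * x))) (Ioi (0:ℝ)) := by
    refine IntegrableOn.congr_fun h (fun x hx => ?_) measurableSet_Ioi
    rw [Real.log_mul hl.ne' (ne_of_gt hx)]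
    ring
  refine IntegrableOn.congr_fun (h2.const_mul l) (fun x _ => by rw [neg_mul]; ring) measurableSet_Ioi

lemma log_pdf_integral (l : ℝ) (hl : 0 < l) :
    ∫ x in Ioi (0:ℝ), Real.log x * (l * Real.exp (-l * x))
      = -Real.eulerMascheroniConstant - Real.log l := by
  have key : ∫ x in Ioi (0:ℝ), (Real.log (l * x) - Real.log l) * Real.exp (-(l * x))
      = l⁻¹ * (-Real.eulerMascheroniConstant - Real.log l) := by
    rw [integral_comp_mul_left_Ioi
      (fun u => (Real.log u - Real.log l) * Real.exp (-u)) 0 hl]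
    simp [integral_aux l hl]
  have congr1 : ∫ x in Ioi (0:ℝ), Real.log x * (l * Real.exp (-l * x))
      = ∫ x in Ioi (0:ℝ), l * ((Real.log (l * x) - Real.log l) * Real.exp (-(l * x))) := by
    refine setIntegral_congr_fun measurableSet_Ioi (fun x hx => ?_)
    rw [Real.log_mul hl.ne' (ne_of_gt hx), neg_mul]
    ring
  rw [congr1, integral_const_mul, key]
  field_simp

lemma pdf_integral_one (l : ℝ) (hl : 0 < l) :
    ∫ x in Ioi (0:ℝ), l * Real.exp (-l * x) = 1 := by
  have : ∫ x in Ioi (0:ℝ), Real.exp (-(l * x)) = l⁻¹ := by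
    rw [integral_comp_mul_left_Ioi (fun u => Real.exp (-u)) 0 hl]
    simp [integral_exp_neg_Ioi_zero, integral_exp_Iic_zero]
  rw [setIntegral_congr_fun measurableSet_Ioi
      (fun x _ => by rw [neg_mul] : ∀ x ∈ Ioi (0:ℝ),
        l * Real.exp (-l * x) = l * Real.exp (-(l * x))),
    integral_const_mul, this, mul_inv_cancel₀ hl.ne']

lemma logb_pdf_integrable (l : ℝ) (hl : 0 < l) :
    IntegrableOn (fun x => Real.logb 2 (1 + x) * (l * Real.exp (-l * x))) (Ioi (0:ℝ)) := by
  -- bound : (log 2)⁻¹ * (x * (l * exp (-l x)))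
  have hb : IntegrableOn (fun x => (Real.log 2)⁻¹ * (x * (l * Real.exp (-l * x)))) (Ioi (0:ℝ)) := by
    have hg : IntegrableOn (fun u => u * Real.exp (-u)) (Ioi (0:ℝ)) := by
      have := Real.GammaIntegral_convergent (s := 2) (by norm_num)
      refine IntegrableOn.congr_fun this (fun u hu => ?_) measurableSet_Ioi
      rw [show (2:ℝ) - 1 = 1 by norm_num, Real.rpow_one]; ring
    have h := (integrableOn_Ioi_comp_mul_left_iff
      (fun u => u * Real.exp (-u)) 0 hl).2 (by simpa using hg)
    refine (IntegrableOn.congr_fun (h.const_mul (Real.log 2)⁻¹)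
      (fun x _ => ?_) measurableSet_Ioi)
    rw [neg_mul]; ring
  refine hb.integrable.mono' ?_ ?_
  · apply Measurable.aestronglyMeasurable
    simp only [Real.logb]
    exact ((Real.measurable_log.comp (measurable_const.add measurable_id)).div_const _).mul
      ((Real.measurable_exp.comp (measurable_id.const_mul (-l))).const_mul l)
  · filter_upwards [ae_restrict_mem measurableSet_Ioi] with x hx
    have hx0 : (0:ℝ) < x := hx
    have h1 : (0:ℝ) ≤ Real.logb 2 (1 + x) :=
      Real.logb_nonneg one_lt_two (by linarith)
    have hpdf : (0:ℝ) ≤ l * Real.exp (-l * x) := by positivity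
    rw [Real.norm_eq_abs, abs_of_nonneg (mul_nonneg h1 hpdf)]
    have h2 : Real.logb 2 (1 + x) ≤ (Real.log 2)⁻¹ * x := by
      rw [Real.logb, div_eq_inv_mul]
      have := Real.log_le_sub_one_of_pos (show (0:ℝ) < 1 + x by linarith)
      have hlog2 : (0:ℝ) < Real.log 2 := Real.log_pos one_lt_two
      nlinarith [inv_pos.2 hlog2]
    nlinarith



/-- For `X ~ Exp(l)` with rate `l > 0`, `E[log₂(1+X)] ≥ log₂(1 + e^{-γ}/l)`, where `γ`
is the Euler–Mascheroni constant.  The expectation is written as the integral against the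
exponential density on `(0, ∞)`. -/
theorem exp_logb_lower_bound (l : ℝ) (hl : 0 < l) :
    Real.logb 2 (1 + Real.exp (-Real.eulerMascheroniConstant) / l)
      ≤ ∫ x in Set.Ioi (0 : ℝ), Real.logb 2 (1 + x) * (l * Real.exp (-l * x)) := by
  set ν := volume.restrict (Ioi (0:ℝ)) with hν
  set pnn : ℝ → ℝ≥0 := fun x => Real.toNNReal (l * Real.exp (-l * x)) with hpnn
  have hpdf_pos : ∀ x, (0:ℝ) ≤ l * Real.exp (-l * x) := fun x => by positivity
  have hcoe : ∀ x, ((pnn x : ℝ)) = l * Real.exp (-l * x) := fun x =>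
    Real.coe_toNNReal _ (hpdf_pos x)
  have hpnn_meas : Measurable pnn :=
    ((Real.measurable_exp.comp (measurable_id.const_mul (-l))).const_mul l).real_toNNReal
  set μ := ν.withDensity (fun x => (pnn x : ℝ≥0∞)) with hμ
  have hpdf_int : Integrable (fun x => l * Real.exp (-l * x)) ν :=
    (exp_neg_integrableOn_Ioi 0 hl).const_mul l
  -- value conversion
  have Hval : ∀ g : ℝ → ℝ, ∫ x, g x ∂μ = ∫ x in Ioi (0:ℝ), g x * (l * Real.exp (-l * x)) := by
    intro g
    rw [hμ, integral_withDensity_eq_integral_smul hpnn_meas g]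
    refine setIntegral_congr_fun measurableSet_Ioi (fun x _ => ?_)
    simp [NNReal.smul_def, hcoe, mul_comm]
  -- integrability conversion
  have Hint : ∀ g : ℝ → ℝ, Integrable (fun x => g x * (l * Real.exp (-l * x))) ν →
      Integrable g μ := by
    intro g hg
    rw [hμ, integrable_withDensity_iff (hpnn_meas.coe_nnreal_ennreal)
      (Eventually.of_forall fun x => ENNReal.coe_lt_top)]
    refine hg.congr (Eventually.of_forall fun x => ?_)
    simp [ENNReal.coe_toReal, hcoe]
  have hprob : IsProbabilityMeasure μ := by
    constructor
    rw [hμ, withDensity_apply _ MeasurableSet.univ, Measure.restrict_univ]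
    have : ∫⁻ x, (pnn x : ℝ≥0∞) ∂ν = ∫⁻ x, ENNReal.ofReal (l * Real.exp (-l * x)) ∂ν := by
      refine lintegral_congr fun x => ?_
      rw [ENNReal.ofReal, hpnn]
    rw [this, ← ofReal_integral_eq_lintegral_ofReal hpdf_int
      (Eventually.of_forall hpdf_pos)]
    rw [show ∫ x, l * Real.exp (-l * x) ∂ν = 1 from pdf_integral_one l hl, ENNReal.ofReal_one]
  -- Jensen
  have hfi : Integrable Real.log μ := Hint _ (log_pdf_integrable l hl)
  have hgi : Integrable ((fun y => Real.logb 2 (1 + Real.exp y)) ∘ Real.log) μ := by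
    refine Hint _ ?_
    refine (logb_pdf_integrable l hl).congr ?_
    filter_upwards [ae_restrict_mem measurableSet_Ioi] with x hx
    simp [Function.comp, Real.exp_log hx]
  have hgc : ContinuousOn (fun y => Real.logb 2 (1 + Real.exp y)) Set.univ := by
    refine Continuous.continuousOn ?_
    simp only [Real.logb]
    exact (continuous_const.add Real.continuous_exp).log
      (fun y => (by positivity : (0:ℝ) < 1 + Real.exp y).ne') |>.div_const _
  have jensen := convexOn_logb_one_add_exp.map_integral_le hgc isClosed_univ
    (Eventually.of_forall fun x => Set.mem_univ _) hfi hgi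
  rw [Hval Real.log] at jensen
  rw [log_pdf_integral l hl] at jensen
  have hleft : Real.logb 2 (1 + Real.exp (-Real.eulerMascheroniConstant - Real.log l))
      = Real.logb 2 (1 + Real.exp (-Real.eulerMascheroniConstant) / l) := by
    rw [Real.exp_sub, Real.exp_log hl]
  have hright : ∫ x, Real.logb 2 (1 + Real.exp (Real.log x)) ∂μ
      = ∫ x in Set.Ioi (0 : ℝ), Real.logb 2 (1 + x) * (l * Real.exp (-l * x)) := by
    rw [Hval]
    refine setIntegral_congr_fun measurableSet_Ioi (fun x hx => ?_)
    rw [Real.exp_log hx]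
  rw [hleft, hright] at jensen
  exact jensen
end

section
/- Let x_U, y_U, x̂_E, ŷ_E, Q, α_E be reals with Q > 0. Then the following are equivalent: (i) for all (Δx, Δy) ∈ ℝ² with Δx² + Δy² ≤ Q², (x̂_E + Δx − x_U)² + (ŷ_E + Δy − y_U)² ≤ α_E; (ii) there exist reals θ and μ ≥ 0 such that (x_U − x̂_E)² + (y_U − ŷ_E)² − α_E ≤ θ and the 3×3 symmetric matrix S = [[μ−1, 0, x_U − x̂_E], [0, μ−1, y_U − ŷ_E], [x_U − x̂_E, y_U − ŷ_E, −Q²μ − θ]] is positive semidefinite. -/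
open Matrix

private lemma s_proc_aux (a b Q αE : ℝ) (hQ : 0 < Q) :
    (∀ Δx Δy : ℝ, Δx ^ 2 + Δy ^ 2 ≤ Q ^ 2 →
        (Δx - a) ^ 2 + (Δy - b) ^ 2 ≤ αE) ↔
      (∃ θ μ : ℝ, 0 ≤ μ ∧ a ^ 2 + b ^ 2 - αE ≤ θ ∧
        (!![μ - 1, 0, a;
            0, μ - 1, b;
            a, b, -Q ^ 2 * μ - θ] : Matrix (Fin 3) (Fin 3) ℝ).PosSemidef) := by
  constructor
  · intro h
    obtain ⟨r, hr0, hr2⟩ : ∃ r : ℝ, 0 ≤ r ∧ r ^ 2 = a ^ 2 + b ^ 2 :=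
      ⟨Real.sqrt (a ^ 2 + b ^ 2), Real.sqrt_nonneg _, Real.sq_sqrt (by positivity)⟩
    have hα : (r + Q) ^ 2 ≤ αE := by
      rcases eq_or_lt_of_le hr0 with hr | hr
      · have hab : a ^ 2 + b ^ 2 = 0 := by rw [← hr2, ← hr]; ring
        have ha0 : a = 0 := by nlinarith [sq_nonneg a, sq_nonneg b]
        have hb0 : b = 0 := by nlinarith [sq_nonneg a, sq_nonneg b]
        have := h Q 0 (by nlinarith)
        rw [ha0, hb0] at this
        rw [← hr]
        nlinarith
      · have hΔ : (-(Q * a / r)) ^ 2 + (-(Q * b / r)) ^ 2 ≤ Q ^ 2 := by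
          have h1 : (-(Q * a / r)) ^ 2 + (-(Q * b / r)) ^ 2 = Q ^ 2 * (a ^ 2 + b ^ 2) / r ^ 2 := by
            field_simp
          rw [h1, ← hr2, mul_div_assoc, div_self (by positivity), mul_one]
        have := h (-(Q * a / r)) (-(Q * b / r)) hΔ
        have hval : (-(Q * a / r) - a) ^ 2 + (-(Q * b / r) - b) ^ 2 = (r + Q) ^ 2 := by
          have : (-(Q * a / r) - a) ^ 2 + (-(Q * b / r) - b) ^ 2
              = (a ^ 2 + b ^ 2) * (Q + r) ^ 2 / r ^ 2 := by field_simp; ring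
          rw [this, ← hr2, mul_comm, mul_div_assoc, div_self (by positivity), mul_one]
          ring
        rw [hval] at this
        exact this
    refine ⟨-Q ^ 2 - 2 * Q * r, 1 + r / Q, by positivity, by nlinarith,
      posSemidef_iff_dotProduct_mulVec.mpr ⟨?_, ?_⟩⟩
    · -- Hermitian
      ext i j
      fin_cases i <;> fin_cases j <;> simp [Matrix.conjTranspose_apply]
    · intro x
      have hF0 : 0 ≤ r * (x 0 ^ 2 + x 1 ^ 2) + 2 * Q * x 2 * (a * x 0 + b * x 1)
          + Q ^ 2 * r * x 2 ^ 2 := by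
        have hkey : r * (r * (x 0 ^ 2 + x 1 ^ 2) + 2 * Q * x 2 * (a * x 0 + b * x 1)
            + Q ^ 2 * r * x 2 ^ 2)
            = (r * x 0 + Q * x 2 * a) ^ 2 + (r * x 1 + Q * x 2 * b) ^ 2 := by
          linear_combination (Q ^ 2 * x 2 ^ 2) * hr2
        rcases eq_or_lt_of_le hr0 with hr | hr
        · have hab : a ^ 2 + b ^ 2 = 0 := by rw [← hr2, ← hr]; ring
          have ha0 : a = 0 := by nlinarith [sq_nonneg a, sq_nonneg b]
          have hb0 : b = 0 := by nlinarith [sq_nonneg a, sq_nonneg b]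
          rw [ha0, hb0, ← hr]; nlinarith
        · nlinarith [sq_nonneg (r * x 0 + Q * x 2 * a), sq_nonneg (r * x 1 + Q * x 2 * b)]
      have hx : (star x) ⬝ᵥ ((!![1 + r / Q - 1, 0, a; 0, 1 + r / Q - 1, b;
          a, b, -Q ^ 2 * (1 + r / Q) - (-Q ^ 2 - 2 * Q * r)] : Matrix (Fin 3) (Fin 3) ℝ) *ᵥ x)
          = (r * (x 0 ^ 2 + x 1 ^ 2) + 2 * Q * x 2 * (a * x 0 + b * x 1)
            + Q ^ 2 * r * x 2 ^ 2) / Q := by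
        simp [Matrix.mulVec, dotProduct, Fin.sum_univ_three]
        field_simp
        ring
      rw [hx]
      positivity
  · rintro ⟨θ, μ, hμ, hθ, hherm, hpsd⟩
    intro Δx Δy hΔ
    have := (posSemidef_iff_dotProduct_mulVec.mp ⟨hherm, hpsd⟩).2 ![Δx, Δy, 1]
    simp [Matrix.mulVec, dotProduct, Fin.sum_univ_three] at this
    nlinarith [mul_nonneg hμ (sub_nonneg.mpr hΔ)]

/-- S-procedure / Schur-complement reformulation of the robust distance constraint.
The worst-case constraint (i) over the disk of radius `Q` around the estimated
eavesdropper location is equivalent to (ii) the existence of `θ` and `μ ≥ 0` making the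
associated `3 × 3` matrix positive semidefinite. -/
theorem s_procedure_robust_distance (xU yU xE yE Q αE : ℝ) (hQ : 0 < Q) :
    (∀ Δx Δy : ℝ, Δx ^ 2 + Δy ^ 2 ≤ Q ^ 2 →
        (xE + Δx - xU) ^ 2 + (yE + Δy - yU) ^ 2 ≤ αE) ↔
      (∃ θ μ : ℝ, 0 ≤ μ ∧ (xU - xE) ^ 2 + (yU - yE) ^ 2 - αE ≤ θ ∧
        (!![μ - 1, 0, xU - xE;
            0, μ - 1, yU - yE;
            xU - xE, yU - yE, -Q ^ 2 * μ - θ] : Matrix (Fin 3) (Fin 3) ℝ).PosSemidef) := by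
  have key := s_proc_aux (xU - xE) (yU - yE) Q αE hQ
  have heq : ∀ Δx Δy : ℝ, (xE + Δx - xU) ^ 2 + (yE + Δy - yU) ^ 2
      = (Δx - (xU - xE)) ^ 2 + (Δy - (yU - yE)) ^ 2 := by intro Δx Δy; ring
  constructor
  · intro h
    exact key.mp (fun Δx Δy hΔ => by rw [← heq]; exact h Δx Δy hΔ)
  · intro h
    intro Δx Δy hΔ
    rw [heq]
    exact key.mpr h Δx Δy hΔ
end
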